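/- Let G=(V,E) be a graph and A,B,C ⊆ V with A ∪ C = V, A ∩ C = B, and no edges between A∖B and C∖B. Then the minimum independent dominating set size of G is at least the minimum independent dominating set size of G[A] plus the minimum independent dominating set size of G[C] minus 2|B|. -/

import Mathlib

/-- `X` is an independent set in `G`. -/
def IsIndepSet' {V : Type*} (G : SimpleGraph V) (X : Set V) : Prop :=
  ∀ x ∈ X, ∀ y ∈ X, ¬ G.Adj x y

/-- `X` is an independent dominating set of the induced subgraph `G[A]`. -/
def IndDomOn {V : Type*} (G : SimpleGraph V) (A X : Set V) : Prop :=
  X ⊆ A ∧ IsIndepSet' G X ∧ ∀ v ∈ A, ∃ x ∈ X, x = v ∨ G.Adj x v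

/-- The minimum size of an independent dominating set of `G[A]`. -/
noncomputable def optIndDom {V : Type*} (G : SimpleGraph V) (A : Set V) : ℕ :=
  sInf {n | ∃ X : Set V, IndDomOn G A X ∧ X.ncard = n}

lemma exists_indDomOn {V : Type*} [Fintype V] (G : SimpleGraph V) (A : Set V) :
    ∃ X, IndDomOn G A X := by
  classical
  set s : Set (Set V) := {X | X ⊆ A ∧ IsIndepSet' G X} with hs
  have hfin : s.Finite := Set.toFinite _
  have hne : s.Nonempty := ⟨∅, by simp [hs, IsIndepSet']⟩
  obtain ⟨X, hXmem, hXmax⟩ := Set.Finite.exists_maximalFor Set.ncard s hfin hne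
  refine ⟨X, hXmem.1, hXmem.2, ?_⟩
  intro v hv
  by_contra h
  push_neg at h
  have hvX : v ∉ X := fun hvX => (h v hvX).1 rfl
  have hmem : insert v X ∈ s := by
    refine ⟨Set.insert_subset hv hXmem.1, ?_⟩
    intro x hx y hy
    rcases Set.mem_insert_iff.1 hx with hxv | hx
    · rcases Set.mem_insert_iff.1 hy with hyv | hy
      · rw [hxv, hyv]; exact G.irrefl
      · rw [hxv]; exact fun hadj => (h y hy).2 hadj.symm
    · rcases Set.mem_insert_iff.1 hy with hyv | hy
      · rw [hyv]; exact (h x hx).2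
      · exact hXmem.2 x hx y hy
  have hcard : (insert v X).ncard = X.ncard + 1 :=
    Set.ncard_insert_of_notMem hvX (Set.toFinite X)
  have := hXmax (j := insert v X) hmem (by omega)
  omega

lemma extend_indDomOn {V : Type*} [Fintype V] (G : SimpleGraph V) (A X : Set V)
    (hXind : IsIndepSet' G X) :
    ∃ Z, Z ⊆ {v | v ∈ A ∧ ¬ ∃ x ∈ X ∩ A, x = v ∨ G.Adj x v} ∧
      IndDomOn G A (X ∩ A ∪ Z) := by
  classical
  set U : Set V := {v | v ∈ A ∧ ¬ ∃ x ∈ X ∩ A, x = v ∨ G.Adj x v} with hU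
  obtain ⟨Z, hZU, hZind, hZdom⟩ := exists_indDomOn G U
  have hnadj : ∀ x ∈ X ∩ A, ∀ z ∈ Z, ¬ G.Adj x z := by
    intro x hx z hz hadj
    exact (hZU hz).2 ⟨x, hx, Or.inr hadj⟩
  refine ⟨Z, hZU, ?_, ?_, ?_⟩
  · exact Set.union_subset (Set.inter_subset_right) (fun z hz => (hZU hz).1)
  · intro x hx y hy
    rcases hx with hx | hx
    · rcases hy with hy | hy
      · exact hXind x hx.1 y hy.1
      · exact hnadj x hx y hy
    · rcases hy with hy | hy
      · exact fun hadj => hnadj y hy x hx hadj.symm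
      · exact hZind x hx y hy
  · intro v hv
    by_cases h : ∃ x ∈ X ∩ A, x = v ∨ G.Adj x v
    · obtain ⟨x, hx, hxv⟩ := h
      exact ⟨x, Or.inl hx, hxv⟩
    · obtain ⟨z, hz, hzv⟩ := hZdom v ⟨hv, h⟩
      exact ⟨z, Or.inr hz, hzv⟩

/-- If `A ∪ C = V`, `A ∩ C = B`, and there are no edges between `A \ B` and `C \ B`, then
`OPT_IND(G) ≥ OPT_IND(G[A]) + OPT_IND(G[C]) - 2|B|`. -/
theorem optIndDom_split_lower_bound {V : Type*} [Fintype V] (G : SimpleGraph V)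
    (A B C : Set V) (hAC : A ∪ C = Set.univ) (hB : A ∩ C = B)
    (hsep : ∀ a ∈ A \ B, ∀ c ∈ C \ B, ¬ G.Adj a c) :
    optIndDom G A + optIndDom G C ≤ optIndDom G Set.univ + 2 * B.ncard := by
  classical
  have hne : {n | ∃ X : Set V, IndDomOn G Set.univ X ∧ X.ncard = n}.Nonempty := by
    obtain ⟨X, hX⟩ := exists_indDomOn G Set.univ
    exact ⟨X.ncard, X, hX, rfl⟩
  obtain ⟨X, ⟨hXsub, hXind, hXdom⟩, hXcard⟩ := Nat.sInf_mem hne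
  obtain ⟨ZA, hZAsub, hA⟩ := extend_indDomOn G A X hXind
  obtain ⟨ZC, hZCsub, hC⟩ := extend_indDomOn G C X hXind
  have hoptA : optIndDom G A ≤ (X ∩ A).ncard + ZA.ncard :=
    le_trans (Nat.sInf_le ⟨_, hA, rfl⟩) (Set.ncard_union_le _ _)
  have hoptC : optIndDom G C ≤ (X ∩ C).ncard + ZC.ncard :=
    le_trans (Nat.sInf_le ⟨_, hC, rfl⟩) (Set.ncard_union_le _ _)
  -- ZA ⊆ B \ X
  have hZAB : ZA ⊆ B \ X := by
    intro v hv
    obtain ⟨hvA, hnot⟩ := hZAsub hv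
    have hvX : v ∉ X := fun h => hnot ⟨v, ⟨h, hvA⟩, Or.inl rfl⟩
    have hvB : v ∈ B := by
      by_contra hvB
      obtain ⟨x, hxX, hx⟩ := hXdom v (Set.mem_univ v)
      rcases hx with rfl | hadj
      · exact hvX hxX
      · have hxA : x ∈ A := by
          by_contra hxA
          have hxC : x ∈ C := (hAC ▸ Set.mem_univ x : x ∈ A ∪ C).resolve_left hxA
          have hxB : x ∉ B := fun h => hxA ((hB ▸ h : x ∈ A ∩ C)).1
          exact hsep v ⟨hvA, hvB⟩ x ⟨hxC, hxB⟩ hadj.symm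
        exact hnot ⟨x, ⟨hxX, hxA⟩, Or.inr hadj⟩
    exact ⟨hvB, hvX⟩
  have hZCB : ZC ⊆ B \ X := by
    intro v hv
    obtain ⟨hvC, hnot⟩ := hZCsub hv
    have hvX : v ∉ X := fun h => hnot ⟨v, ⟨h, hvC⟩, Or.inl rfl⟩
    have hvB : v ∈ B := by
      by_contra hvB
      obtain ⟨x, hxX, hx⟩ := hXdom v (Set.mem_univ v)
      rcases hx with rfl | hadj
      · exact hvX hxX
      · have hxC : x ∈ C := by
          by_contra hxC
          have hxA : x ∈ A := (hAC ▸ Set.mem_univ x : x ∈ A ∪ C).resolve_right hxC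
          have hxB : x ∉ B := fun h => hxC ((hB ▸ h : x ∈ A ∩ C)).2
          exact hsep x ⟨hxA, hxB⟩ v ⟨hvC, hvB⟩ hadj
        exact hnot ⟨x, ⟨hxX, hxC⟩, Or.inr hadj⟩
    exact ⟨hvB, hvX⟩
  -- cardinality arithmetic
  have h1 : (X ∩ A).ncard + (X ∩ C).ncard = X.ncard + (X ∩ B).ncard := by
    have hsum := Set.ncard_union_add_ncard_inter (X ∩ A) (X ∩ C)
    have hu : (X ∩ A) ∪ (X ∩ C) = X := by
      rw [← Set.inter_union_distrib_left, hAC, Set.inter_univ]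
    have hi : (X ∩ A) ∩ (X ∩ C) = X ∩ B := by
      rw [← hB]; ext v; simp only [Set.mem_inter_iff]; tauto
    rw [hu, hi] at hsum
    omega
  have h2 : (X ∩ B).ncard + ZA.ncard ≤ B.ncard := by
    have hdisj : Disjoint (X ∩ B) ZA := by
      rw [Set.disjoint_left]
      exact fun a ha haZ => (hZAB haZ).2 ha.1
    have := Set.ncard_union_eq hdisj (Set.toFinite _) (Set.toFinite _)
    have hsub : (X ∩ B) ∪ ZA ⊆ B :=
      Set.union_subset (Set.inter_subset_right) (fun a ha => (hZAB ha).1)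
    have := Set.ncard_le_ncard hsub (Set.toFinite B)
    omega
  have h3 : ZC.ncard ≤ B.ncard :=
    Set.ncard_le_ncard (fun a ha => (hZCB ha).1) (Set.toFinite B)
  have h4 : optIndDom G Set.univ = X.ncard := by rw [optIndDom, ← hXcard]
  omega
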